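/- Upper bound on the 0-stabilizer entropy of subset phase states: for any subset S ⊆ {0,1}^n and any function f: {0,1}^n → {0,1}, the subset phase state |ψ_{f,S}⟩ = |S|^{−1/2} Σ_{x∈S} (−1)^{f(x)} |x⟩ satisfies M₀(ψ_{f,S}) ≤ 2 log|S|, i.e., the number of Pauli operators P with tr(P ψ_{f,S}) ≠ 0 is at most |S|²·2^n. -/

import Mathlib

open scoped BigOperators
open ComplexConjugate
open scoped ComplexOrder

/-- The positive semidefinite square root of a positive semidefinite matrix, as
`Matrix.PosSemidef.sqrt` was defined in the older Mathlib (since removed). -/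
noncomputable def posSemidefSqrt {ι : Type*} [Fintype ι] [DecidableEq ι] {A : Matrix ι ι ℂ}
    (hA : A.PosSemidef) : Matrix ι ι ℂ :=
  hA.1.eigenvectorUnitary.1 * Matrix.diagonal ((↑) ∘ (√·) ∘ hA.1.eigenvalues) *
    (star hA.1.eigenvectorUnitary : Matrix ι ι ℂ)

noncomputable def traceNorm {ι : Type*} [Fintype ι] [DecidableEq ι] (A : Matrix ι ι ℂ) : ℝ :=
  ((posSemidefSqrt (Matrix.posSemidef_conjTranspose_mul_self A)).trace).re

noncomputable def proj {ι : Type*} (v : ι → ℂ) : Matrix ι ι ℂ :=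
  Matrix.of fun i j => v i * conj (v j)

noncomputable def tensorPow {ι : Type*} (A : Matrix ι ι ℂ) (t : ℕ) :
    Matrix (Fin t → ι) (Fin t → ι) ℂ :=
  Matrix.of fun x y => ∏ i, A (x i) (y i)

noncomputable def pauli {n : ℕ} (a b : Fin n → ZMod 2) :
    Matrix (Fin n → ZMod 2) (Fin n → ZMod 2) ℂ :=
  Matrix.of fun x y =>
    if x = y + a then
      Complex.I ^ (∑ i, (a i * b i).val) * (-1 : ℂ) ^ (∑ i, (b i * y i).val)
    else 0

noncomputable def xi {n : ℕ} (ρ : Matrix (Fin n → ZMod 2) (Fin n → ZMod 2) ℂ)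
    (p : (Fin n → ZMod 2) × (Fin n → ZMod 2)) : ℝ :=
  Complex.normSq ((pauli p.1 p.2 * ρ).trace) / 2 ^ n

/-- α-stabilizer Rényi entropy M_α(ψ) = S_α(Ξ_ψ) − log d, covering α = 0, α = 1 and
generic α via the classical Rényi entropy (base-2 logs). -/
noncomputable def MStab (α : ℝ) {n : ℕ}
    (ρ : Matrix (Fin n → ZMod 2) (Fin n → ZMod 2) ℂ) : ℝ :=
  (if α = 1 then
      - ∑ p : (Fin n → ZMod 2) × (Fin n → ZMod 2), xi ρ p * Real.logb 2 (xi ρ p)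
    else if α = 0 then
      Real.logb 2 (({p : (Fin n → ZMod 2) × (Fin n → ZMod 2) | xi ρ p ≠ 0}.ncard : ℝ))
    else
      (1 / (1 - α)) * Real.logb 2
        (∑ p : (Fin n → ZMod 2) × (Fin n → ZMod 2), xi ρ p ^ α)) - n

set_option maxHeartbeats 2000000 in
/-- upper bound on the 0-stabilizer entropy of subset phase states:
the number of Pauli operators with nonzero expectation is at most |S|²·2^n, and
M₀(ψ_{f,S}) ≤ 2 log|S|. -/
theorem M0_subset_phase_le {n : ℕ} (S : Finset (Fin n → ZMod 2)) (hS : S.Nonempty)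
    (f : (Fin n → ZMod 2) → ZMod 2) :
    let ψ : (Fin n → ZMod 2) → ℂ :=
      fun x => if x ∈ S then (-1 : ℂ) ^ (f x).val / (Real.sqrt S.card : ℂ) else 0
    {p : (Fin n → ZMod 2) × (Fin n → ZMod 2) |
        (pauli p.1 p.2 * proj ψ).trace ≠ 0}.ncard ≤ S.card ^ 2 * 2 ^ n ∧
    MStab 0 (proj ψ) ≤ 2 * Real.logb 2 (S.card : ℝ) := by
  intro ψ
  classical
  have hz2 : ∀ z : ZMod 2, z + z = 0 := by decide
  have hS1 : (1 : ℝ) ≤ S.card := by exact_mod_cast Finset.card_pos.mpr hS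
  have key : ∀ a b : Fin n → ZMod 2, (pauli a b * proj ψ).trace ≠ 0 →
      ∃ x, x ∈ S ∧ x + a ∈ S := by
    intro a b h
    by_contra hc
    push_neg at hc
    apply h
    rw [Matrix.trace]
    refine Finset.sum_eq_zero fun x _ => ?_
    rw [Matrix.diag_apply, Matrix.mul_apply]
    refine Finset.sum_eq_zero fun y _ => ?_
    simp only [pauli, proj, Matrix.of_apply]
    by_cases hxy : x = y + a
    · have hy : y = x + a := by
        rw [hxy]; funext i; simp [add_assoc, hz2]
      subst hy
      rcases Classical.em (x ∈ S) with hx | hx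
      · have hxa : x + a ∉ S := hc x hx
        simp [ψ, hxa]
      · simp [ψ, hx]
    · simp [hxy]
  set T : Set ((Fin n → ZMod 2) × (Fin n → ZMod 2)) :=
    {p | (pauli p.1 p.2 * proj ψ).trace ≠ 0} with hT
  have hcard : T.ncard ≤ S.card ^ 2 * 2 ^ n := by
    have hsub : T.ncard ≤
        (((S ×ˢ S ×ˢ (Finset.univ : Finset (Fin n → ZMod 2)) :
          Finset ((Fin n → ZMod 2) × (Fin n → ZMod 2) × (Fin n → ZMod 2)))) :
          Set ((Fin n → ZMod 2) × (Fin n → ZMod 2) × (Fin n → ZMod 2))).ncard := by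
      refine Set.ncard_le_ncard_of_injOn
        (fun p => if h : ∃ x, x ∈ S ∧ x + p.1 ∈ S
          then (h.choose, h.choose + p.1, p.2) else (0, 0, 0)) ?_ ?_ (Set.toFinite _)
      · intro p hp
        have h : ∃ x, x ∈ S ∧ x + p.1 ∈ S := key p.1 p.2 hp
        simp only [dif_pos h, Finset.coe_product, Set.mem_prod, Finset.mem_coe]
        exact ⟨h.choose_spec.1, h.choose_spec.2, by simp⟩
      · intro p hp q hq heq
        have h : ∃ x, x ∈ S ∧ x + p.1 ∈ S := key p.1 p.2 hp
        have h' : ∃ x, x ∈ S ∧ x + q.1 ∈ S := key q.1 q.2 hq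
        simp only [dif_pos h, dif_pos h', Prod.mk.injEq] at heq
        obtain ⟨e1, e2, e3⟩ := heq
        have : p.1 = q.1 := by
          have := e2
          rw [e1] at this
          exact add_left_cancel this
        exact Prod.ext this e3
    have : (((S ×ˢ S ×ˢ (Finset.univ : Finset (Fin n → ZMod 2)) :
          Finset ((Fin n → ZMod 2) × (Fin n → ZMod 2) × (Fin n → ZMod 2)))) :
          Set ((Fin n → ZMod 2) × (Fin n → ZMod 2) × (Fin n → ZMod 2))).ncard
        = S.card ^ 2 * 2 ^ n := by
      rw [Set.ncard_coe_finset]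
      simp [Finset.card_product, sq, mul_assoc, ZMod.card]
    omega
  have hsetT : {p : (Fin n → ZMod 2) × (Fin n → ZMod 2) | xi (proj ψ) p ≠ 0} = T := by
    ext p
    simp only [hT, Set.mem_setOf_eq, xi, ne_eq, div_eq_zero_iff, Complex.normSq_eq_zero,
      not_or]
    constructor
    · intro h; exact h.1
    · intro h
      exact ⟨h, by positivity⟩
  have hM : MStab 0 (proj ψ) = Real.logb 2 (T.ncard : ℝ) - n := by
    simp [MStab, hsetT]
  refine ⟨hcard, ?_⟩
  rw [hM]
  have hlogS : 0 ≤ Real.logb 2 (S.card : ℝ) := Real.logb_nonneg one_lt_two hS1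
  rcases eq_or_ne T.ncard 0 with h0 | h0
  · rw [h0]
    simp only [Nat.cast_zero, Real.logb_zero]
    have : (0:ℝ) ≤ n := Nat.cast_nonneg n
    linarith
  · have h1 : (1:ℝ) ≤ (T.ncard : ℝ) := by exact_mod_cast Nat.one_le_iff_ne_zero.mpr h0
    have hle : (T.ncard : ℝ) ≤ (S.card : ℝ) ^ 2 * 2 ^ n := by exact_mod_cast hcard
    have hmono : Real.logb 2 (T.ncard : ℝ) ≤ Real.logb 2 ((S.card : ℝ) ^ 2 * 2 ^ n) :=
      Real.logb_le_logb_of_le one_lt_two (by linarith) hle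
    have hcalc : Real.logb 2 ((S.card : ℝ) ^ 2 * 2 ^ n)
        = 2 * Real.logb 2 (S.card : ℝ) + n := by
      have hSne : ((S.card : ℝ) ^ 2) ≠ 0 := by positivity
      have h2ne : ((2 : ℝ) ^ n) ≠ 0 := by positivity
      rw [Real.logb_mul hSne h2ne, Real.logb_pow, Real.logb_pow,
        Real.logb_self_eq_one one_lt_two]
      push_cast; ring
    linarith
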